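/- arXiv:1801.09709 — 3 statements merged into one kernel-verified Lean document; each statement's English description precedes it below -/
import Mathlib

section
/- Among all probability distributions on the nonnegative integers with mean equal to C, the distribution concentrated on {⌊C⌋, ⌈C⌉} (i.e., stochastic rounding of C) uniquely minimizes the variance. -/
/-- Among all probability distributions on the nonnegative integers with mean
equal to a non-integral `C ≥ 0`, the distribution concentrated on `{⌊C⌋, ⌈C⌉}` (stochastic
rounding of `C`, giving mass `⌈C⌉ - C` to `⌊C⌋` and `C - ⌊C⌋` to `⌈C⌉`) uniquely minimizes
the variance, whose minimal value is `(⌈C⌉ - C) * (C - ⌊C⌋)`. -/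
theorem stochastic_rounding_min_variance
    (C : ℝ) (hC : 0 ≤ C) (hni : (⌊C⌋₊ : ℝ) ≠ C)
    (p : ℕ → ℝ) (hnn : ∀ n, 0 ≤ p n)
    (hsum : Summable p) (htot : ∑' (n : ℕ), p n = 1)
    (hms : Summable (fun n : ℕ => (n : ℝ) * p n)) (hmean : ∑' (n : ℕ), (n : ℝ) * p n = C)
    (hvs : Summable (fun n : ℕ => ((n : ℝ) - C) ^ 2 * p n)) :
    ((⌈C⌉₊ : ℝ) - C) * (C - ⌊C⌋₊) ≤ ∑' (n : ℕ), ((n : ℝ) - C) ^ 2 * p n ∧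
    ((∑' (n : ℕ), ((n : ℝ) - C) ^ 2 * p n = ((⌈C⌉₊ : ℝ) - C) * (C - ⌊C⌋₊)) ↔
      (p ⌊C⌋₊ = (⌈C⌉₊ : ℝ) - C ∧ p ⌈C⌉₊ = C - (⌊C⌋₊ : ℝ) ∧
        ∀ n, n ≠ ⌊C⌋₊ → n ≠ ⌈C⌉₊ → p n = 0)) := by
  set a : ℕ := ⌊C⌋₊ with ha
  have haC : (a : ℝ) < C := lt_of_le_of_ne (Nat.floor_le hC) hni
  have hCa1 : C < (a : ℝ) + 1 := Nat.lt_floor_add_one C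
  have hceil : ⌈C⌉₊ = a + 1 := by
    rw [Nat.ceil_eq_iff (by omega)]
    constructor
    · simpa using haC
    · push_cast; exact le_of_lt hCa1
  rw [hceil]
  push_cast
  set g : ℕ → ℝ := fun n => ((n : ℝ) - a) * ((n : ℝ) - ((a : ℝ) + 1)) * p n with hg
  have hg_eq : ∀ n : ℕ, g n = ((n : ℝ) - C) ^ 2 * p n
      + (2 * C - (2 * (a : ℝ) + 1)) * ((n : ℝ) * p n)
      + (((a : ℝ) * ((a : ℝ) + 1)) - C ^ 2) * p n := by
    intro n; simp only [hg]; ring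
  have hgs : Summable g :=
    ((hvs.add (hms.mul_left _)).add (hsum.mul_left _)).congr fun n => (hg_eq n).symm
  have htsum : ∑' (n : ℕ), g n = (∑' (n : ℕ), ((n : ℝ) - C) ^ 2 * p n)
      + (2 * C - (2 * (a : ℝ) + 1)) * C + (((a : ℝ) * ((a : ℝ) + 1)) - C ^ 2) := by
    calc ∑' (n : ℕ), g n
        = ∑' (n : ℕ), (((n : ℝ) - C) ^ 2 * p n
            + (2 * C - (2 * (a : ℝ) + 1)) * ((n : ℝ) * p n)
            + (((a : ℝ) * ((a : ℝ) + 1)) - C ^ 2) * p n) := tsum_congr hg_eq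
      _ = (∑' (n : ℕ), (((n : ℝ) - C) ^ 2 * p n
            + (2 * C - (2 * (a : ℝ) + 1)) * ((n : ℝ) * p n)))
            + ∑' (n : ℕ), (((a : ℝ) * ((a : ℝ) + 1)) - C ^ 2) * p n :=
          Summable.tsum_add (hvs.add (hms.mul_left _)) (hsum.mul_left _)
      _ = ((∑' (n : ℕ), ((n : ℝ) - C) ^ 2 * p n)
            + ∑' (n : ℕ), (2 * C - (2 * (a : ℝ) + 1)) * ((n : ℝ) * p n))
            + ∑' (n : ℕ), (((a : ℝ) * ((a : ℝ) + 1)) - C ^ 2) * p n := by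
          rw [Summable.tsum_add hvs (hms.mul_left _)]
      _ = _ := by rw [tsum_mul_left, tsum_mul_left, hmean, htot]; ring
  have key : ∑' (n : ℕ), ((n : ℝ) - C) ^ 2 * p n
      = (∑' (n : ℕ), g n) + ((a : ℝ) + 1 - C) * (C - (a : ℝ)) := by
    rw [htsum]; ring
  have hgnn : ∀ n, 0 ≤ g n := by
    intro n
    have hp := hnn n
    rcases le_or_gt n a with h | h
    · have h1 : (n : ℝ) ≤ a := by exact_mod_cast h
      have hq : 0 ≤ ((n : ℝ) - a) * ((n : ℝ) - ((a : ℝ) + 1)) := by nlinarith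
      exact mul_nonneg hq hp
    · have h1 : (a : ℝ) + 1 ≤ n := by exact_mod_cast h
      have hq : 0 ≤ ((n : ℝ) - a) * ((n : ℝ) - ((a : ℝ) + 1)) := by nlinarith
      exact mul_nonneg hq hp
  have htg : 0 ≤ ∑' (n : ℕ), g n := tsum_nonneg hgnn
  constructor
  · linarith [key]
  constructor
  · intro hV
    have hg0 : ∀ n, g n = 0 := by
      have hT : ∑' (n : ℕ), g n = 0 := by linarith [key]
      intro n
      exact le_antisymm (hT ▸ Summable.le_tsum hgs n fun m _ => hgnn m) (hgnn n)
    have hz : ∀ n, n ≠ a → n ≠ a + 1 → p n = 0 := by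
      intro n hn1 hn2
      have h1 : (n : ℝ) - a ≠ 0 := by
        intro h; apply hn1; exact_mod_cast sub_eq_zero.mp h
      have h2 : (n : ℝ) - ((a : ℝ) + 1) ≠ 0 := by
        intro h; apply hn2
        have : (n : ℝ) = (a : ℝ) + 1 := by linarith [sub_eq_zero.mp h]
        exact_mod_cast this
      have := hg0 n
      simp only [hg] at this
      rcases mul_eq_zero.mp this with h | h
      · exact absurd h (mul_ne_zero h1 h2)
      · exact h
    have hne : a ≠ a + 1 := by omega
    have hsupp : ∀ b : ℕ, b ∉ ({a, a + 1} : Finset ℕ) → p b = 0 := by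
      intro b hb
      simp only [Finset.mem_insert, Finset.mem_singleton] at hb
      push_neg at hb
      exact hz b hb.1 hb.2
    have hsupp2 : ∀ b : ℕ, b ∉ ({a, a + 1} : Finset ℕ) → (b : ℝ) * p b = 0 := by
      intro b hb; rw [hsupp b hb, mul_zero]
    have e1 : p a + p (a + 1) = 1 := by
      have := htot
      rw [tsum_eq_sum hsupp, Finset.sum_pair hne] at this
      exact this
    have e2 : (a : ℝ) * p a + ((a : ℝ) + 1) * p (a + 1) = C := by
      have := hmean
      rw [tsum_eq_sum hsupp2, Finset.sum_pair hne] at this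
      push_cast at this
      linarith
    refine ⟨by linear_combination ((a : ℝ) + 1) * e1 - e2, by linear_combination e2 - (a : ℝ) * e1, hz⟩
  · rintro ⟨h1, h2, h3⟩
    have hg0 : ∀ n, g n = 0 := by
      intro n
      rcases eq_or_ne n a with rfl | hn1
      · simp [hg]
      rcases eq_or_ne n (a + 1) with rfl | hn2
      · simp only [hg]; push_cast; ring
      · simp [hg, h3 n hn1 hn2]
    have : ∑' (n : ℕ), g n = 0 := by
      have : g = fun _ => (0 : ℝ) := funext hg0
      rw [this, tsum_zero]
    rw [key, this, zero_add]
end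

section
/- Let C_t = R_t + A_t where, conditionally on C_{t−1} and batch size B_t, R_t ~ Binomial(C_{t−1}, p) and A_t ~ Binomial(B_t, q) are independent, with {B_t} i.i.d. of mean b and variance σ²_B, p ∈ (0,1), q = n(1−p)/b, and C_0 = n. Then Var[C_t] = αn + σ²_B q²/(1−p²) + O(p^t), where α = (1+p−q)/(1+p). -/
open MeasureTheory

/-- The probability that a `Binomial (k, r)` random variable equals `i`. -/
noncomputable def binomPMF (r : ℝ) (k i : ℕ) : ℝ :=
  if i ≤ k then (k.choose i : ℝ) * r ^ i * (1 - r) ^ (k - i) else 0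

open Finset ENNReal

lemma binomPMF_nonneg {r : ℝ} (h0 : 0 ≤ r) (h1 : r ≤ 1) (k i : ℕ) : 0 ≤ binomPMF r k i := by
  unfold binomPMF
  split
  · have : (0:ℝ) ≤ 1 - r := by linarith
    positivity
  · exact le_refl 0

lemma binomPMF_eq_zero {r : ℝ} {k i : ℕ} (h : k < i) : binomPMF r k i = 0 := by
  simp [binomPMF, Nat.not_le.mpr h]

lemma sum_choose_mul (a b : ℝ) (k : ℕ) :
    ∑ i ∈ range (k+1), (k.choose i : ℝ) * a ^ i * b ^ (k - i) = (a + b) ^ k := by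
  rw [add_pow]
  exact Finset.sum_congr rfl (fun i hi => by ring)

lemma succ_choose (K j : ℕ) : ((j:ℝ)+1) * ((K+1).choose (j+1) : ℝ) = (K+1) * (K.choose j : ℝ) := by
  have := Nat.add_one_mul_choose_eq K j
  have : ((K + 1) * K.choose j : ℕ) = ((K + 1).choose (j + 1) * (j + 1) : ℕ) := this
  have h2 : ((K:ℝ) + 1) * (K.choose j : ℝ) = ((K + 1).choose (j + 1) : ℝ) * ((j:ℝ) + 1) := by
    exact_mod_cast congrArg (Nat.cast : ℕ → ℝ) this
  linarith [h2]

lemma sum_i_choose_mul (a b : ℝ) (k : ℕ) :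
    ∑ i ∈ range (k+1), (i : ℝ) * ((k.choose i : ℝ) * a ^ i * b ^ (k - i))
      = k * a * (a + b) ^ (k - 1) := by
  cases k with
  | zero => simp
  | succ K =>
    rw [Finset.sum_range_succ']
    push_cast
    have : ∀ j ∈ range (K+1), ((j:ℝ)+1) * (((K+1).choose (j+1) : ℝ) * a ^ (j+1) * b ^ (K - j))
        = ((K:ℝ)+1) * a * ((K.choose j : ℝ) * a ^ j * b ^ (K - j)) := by
      intro j hj
      have h := succ_choose K j
      rw [pow_succ]
      linear_combination (a ^ j * a * b ^ (K - j)) * h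
    rw [Finset.sum_congr rfl this, ← Finset.mul_sum, sum_choose_mul]
    simp

lemma sum_ii_choose_mul (a b : ℝ) (k : ℕ) :
    ∑ i ∈ range (k+1), (i : ℝ) * ((i:ℝ) - 1) * ((k.choose i : ℝ) * a ^ i * b ^ (k - i))
      = k * (k - 1) * a^2 * (a + b) ^ (k - 2) := by
  cases k with
  | zero => simp
  | succ K =>
    rw [Finset.sum_range_succ']
    push_cast
    have : ∀ j ∈ range (K+1), ((j:ℝ)+1) * (((j:ℝ)+1) - 1) * (((K+1).choose (j+1) : ℝ) * a ^ (j+1) * b ^ (K - j))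
        = ((K:ℝ)+1) * a * ((j:ℝ) * ((K.choose j : ℝ) * a ^ j * b ^ (K - j))) := by
      intro j hj
      have h := succ_choose K j
      rw [pow_succ]
      linear_combination ((j:ℝ) * a ^ j * a * b ^ (K - j)) * h
    rw [Finset.sum_congr rfl this, ← Finset.mul_sum, sum_i_choose_mul]
    ring

lemma sum_binomPMF (r : ℝ) (k : ℕ) : ∑ i ∈ range (k+1), binomPMF r k i = 1 := by
  have : ∀ i ∈ range (k+1), binomPMF r k i = (k.choose i : ℝ) * r ^ i * (1-r) ^ (k - i) := by
    intro i hi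
    have : i ≤ k := by simpa [Nat.lt_succ_iff] using hi
    simp [binomPMF, this]
  rw [Finset.sum_congr rfl this, sum_choose_mul]
  norm_num

lemma sum_i_binomPMF (r : ℝ) (k : ℕ) :
    ∑ i ∈ range (k+1), (i:ℝ) * binomPMF r k i = k * r := by
  have : ∀ i ∈ range (k+1), (i:ℝ) * binomPMF r k i
      = (i:ℝ) * ((k.choose i : ℝ) * r ^ i * (1-r) ^ (k - i)) := by
    intro i hi
    have : i ≤ k := by simpa [Nat.lt_succ_iff] using hi
    simp [binomPMF, this]
  rw [Finset.sum_congr rfl this, sum_i_choose_mul]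
  norm_num

lemma sum_sq_binomPMF (r : ℝ) (k : ℕ) :
    ∑ i ∈ range (k+1), (i:ℝ)^2 * binomPMF r k i = (k:ℝ) * ((k:ℝ)-1) * r^2 + k * r := by
  have h1 : ∀ i ∈ range (k+1), (i:ℝ)^2 * binomPMF r k i
      = (i:ℝ) * ((i:ℝ)-1) * ((k.choose i : ℝ) * r ^ i * (1-r) ^ (k - i))
        + (i:ℝ) * binomPMF r k i := by
    intro i hi
    have hik : i ≤ k := by simpa [Nat.lt_succ_iff] using hi
    simp only [binomPMF, if_pos hik]
    ring
  rw [Finset.sum_congr rfl h1, Finset.sum_add_distrib, sum_ii_choose_mul, sum_i_binomPMF]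
  norm_num

lemma sum_triangle {M : Type*} [AddCommMonoid M] (N : ℕ) (f : ℕ → ℕ → M) :
    ∑ c ∈ range N, ∑ i ∈ range (c+1), f i (c-i)
      = ∑ i ∈ range N, ∑ j ∈ range (N - i), f i j := by
  rw [Finset.sum_sigma', Finset.sum_sigma']
  apply Finset.sum_bij' (fun x _ => (⟨x.2, x.1 - x.2⟩ : Σ _ : ℕ, ℕ))
    (fun x _ => (⟨x.1 + x.2, x.1⟩ : Σ _ : ℕ, ℕ)) <;>
  · intro x hx
    obtain ⟨a, b⟩ := x
    simp only [Finset.mem_sigma, Finset.mem_range, Sigma.mk.inj_iff, heq_eq_eq] at hx ⊢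
    try first
    | omega
    | (constructor <;> omega)
    | (refine ⟨by omega, trivial⟩)
    | (refine ⟨trivial, by omega⟩)
    | rfl

open MeasureTheory ENNReal

section Meas
variable {Ω : Type*} [MeasurableSpace Ω] (μ : Measure Ω)

lemma measure_partition (X : Ω → ℕ) (hX : Measurable X) {s : Set Ω} (hs : MeasurableSet s) :
    μ s = ∑' c : ℕ, μ (s ∩ {ω | X ω = c}) := by
  have h1 : s = ⋃ c : ℕ, s ∩ {ω | X ω = c} := by
    ext ω; simp
  have hmeas : ∀ c : ℕ, MeasurableSet (s ∩ {ω | X ω = c}) := fun c =>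
    hs.inter (hX (measurableSet_singleton c))
  have hdisj : Pairwise (Function.onFun Disjoint fun c : ℕ => s ∩ {ω | X ω = c}) := by
    intro c d hcd
    refine Set.disjoint_left.mpr ?_
    rintro ω ⟨-, h1⟩ ⟨-, h2⟩
    exact hcd (h1.symm.trans h2)
  conv_lhs => rw [h1]
  exact measure_iUnion hdisj hmeas

lemma lint_nat (X : Ω → ℕ) (hX : Measurable X) (g : ℕ → ℝ≥0∞) :
    ∫⁻ ω, g (X ω) ∂μ = ∑' c : ℕ, g c * μ {ω | X ω = c} := by
  rw [← lintegral_map measurable_from_nat hX, lintegral_countable']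
  congr 1
  ext c
  rw [Measure.map_apply hX (measurableSet_singleton c)]
  rfl

end Meas

section Key
variable {Ω : Type*} [MeasurableSpace Ω] (μ : Measure Ω) [IsProbabilityMeasure μ]
  {p q : ℝ} (hp0 : 0 ≤ p) (hp1 : p ≤ 1) (hq0 : 0 ≤ q) (hq1 : q ≤ 1)
  (Ct C' B' R' A' : Ω → ℕ) (hmCt : Measurable Ct) (hmC' : Measurable C') (hmB' : Measurable B')
  (hsum : ∀ ω, C' ω = R' ω + A' ω)
  (hbinom : ∀ k m i j, μ {ω | Ct ω = k ∧ B' ω = m ∧ R' ω = i ∧ A' ω = j}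
      = μ {ω | Ct ω = k ∧ B' ω = m} * ENNReal.ofReal (binomPMF p k i * binomPMF q m j))

/-- convolution pmf -/
noncomputable def convS (p q : ℝ) (k m c : ℕ) : ℝ :=
  ∑ i ∈ range (c+1), binomPMF p k i * binomPMF q m (c-i)

include hp0 hp1 hq0 hq1 in
lemma convS_nonneg (k m c : ℕ) : 0 ≤ convS p q k m c :=
  Finset.sum_nonneg fun i _ => mul_nonneg (binomPMF_nonneg hp0 hp1 _ _) (binomPMF_nonneg hq0 hq1 _ _)

lemma convS_eq_zero {k m c : ℕ} (h : k + m < c) : convS p q k m c = 0 := by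
  apply Finset.sum_eq_zero
  intro i hi
  rcases le_or_gt i k with h1 | h1
  · have : m < c - i := by omega
    rw [binomPMF_eq_zero this, mul_zero]
  · rw [binomPMF_eq_zero h1, zero_mul]

lemma sum_convS (k m : ℕ) : ∑ c ∈ range (k+m+1), convS p q k m c = 1 := by
  unfold convS
  rw [sum_triangle (k+m+1) (fun i j => binomPMF p k i * binomPMF q m j)]
  have h1 : ∀ i ∈ range (k+m+1),
      ∑ j ∈ range (k+m+1-i), binomPMF p k i * binomPMF q m j
        = binomPMF p k i * ∑ j ∈ range (m+1), binomPMF q m j := by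
    intro i hi
    rcases le_or_gt i k with h1 | h1
    · rw [← Finset.mul_sum]
      congr 1
      apply (Finset.sum_subset ?_ ?_).symm
      · apply Finset.range_subset_range.mpr; omega
      · intro j hj hj2
        simp only [Finset.mem_range, not_lt] at hj2
        exact binomPMF_eq_zero (by omega)
    · simp [binomPMF_eq_zero h1]
  rw [Finset.sum_congr rfl h1]
  simp only [sum_binomPMF, mul_one]
  have h2 : ∑ i ∈ range (k+m+1), binomPMF p k i = ∑ i ∈ range (k+1), binomPMF p k i := by
    symm
    apply Finset.sum_subset (Finset.range_subset_range.mpr (by omega))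
    intro i _ hi2
    simp only [Finset.mem_range, not_lt] at hi2
    exact binomPMF_eq_zero (by omega)
  rw [h2, sum_binomPMF]

include hp0 hp1 hq0 hq1 hmCt hmC' hmB' hsum hbinom in
lemma measure_key (k m c : ℕ) :
    μ ({ω | Ct ω = k ∧ B' ω = m} ∩ {ω | C' ω = c})
      = μ {ω | Ct ω = k ∧ B' ω = m} * ENNReal.ofReal (convS p q k m c) := by
  set S : Set Ω := {ω | Ct ω = k ∧ B' ω = m} with hSdef
  have hS : MeasurableSet S := (hmCt (measurableSet_singleton k)).inter (hmB' (measurableSet_singleton m))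
  set a : ℕ → ℝ≥0∞ := fun c => μ (S ∩ {ω | C' ω = c}) with ha
  set bb : ℕ → ℝ≥0∞ := fun c => μ S * ENNReal.ofReal (convS p q k m c) with hbb
  have hle : ∀ c, a c ≤ bb c := by
    intro c
    have hsub : S ∩ {ω | C' ω = c}
        ⊆ ⋃ i ∈ range (c+1), {ω | Ct ω = k ∧ B' ω = m ∧ R' ω = i ∧ A' ω = c - i} := by
      rintro ω ⟨⟨h1, h2⟩, h3⟩
      have h4 := hsum ω
      simp only [Set.mem_setOf_eq] at h3
      refine Set.mem_biUnion (Finset.mem_range.mpr (show R' ω < c + 1 by omega)) ?_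
      exact ⟨h1, h2, rfl, by omega⟩
    calc a c ≤ ∑ i ∈ range (c+1), μ {ω | Ct ω = k ∧ B' ω = m ∧ R' ω = i ∧ A' ω = c - i} :=
          le_trans (measure_mono hsub) (measure_biUnion_finset_le _ _)
      _ = ∑ i ∈ range (c+1), μ S * ENNReal.ofReal (binomPMF p k i * binomPMF q m (c-i)) := by
          exact Finset.sum_congr rfl fun i _ => hbinom k m i (c-i)
      _ = μ S * ∑ i ∈ range (c+1), ENNReal.ofReal (binomPMF p k i * binomPMF q m (c-i)) := by
          rw [Finset.mul_sum]
      _ = bb c := by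
          rw [hbb]
          congr 1
          unfold convS
          exact (ENNReal.ofReal_sum_of_nonneg (fun i _ =>
            mul_nonneg (binomPMF_nonneg hp0 hp1 _ _) (binomPMF_nonneg hq0 hq1 _ _))).symm
  have hsuma : ∑' c, a c = μ S := (measure_partition μ C' hmC' hS).symm
  have hsumb : ∑' c, bb c = μ S := by
    have hz : ∀ c ∉ range (k+m+1), bb c = 0 := by
      intro c hc
      simp only [Finset.mem_range, not_lt] at hc
      rw [hbb]
      simp [convS_eq_zero (p := p) (q := q) (show k + m < c by omega)]
    rw [tsum_eq_sum hz]
    simp only [hbb]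
    rw [← Finset.mul_sum, ← ENNReal.ofReal_sum_of_nonneg
      (fun c _ => convS_nonneg hp0 hp1 hq0 hq1 k m c), sum_convS]
    simp
  have hane : ∑' c, a c ≠ ⊤ := by rw [hsuma]; exact (measure_lt_top μ S).ne
  by_contra hne
  have hlt : a c < bb c := lt_of_le_of_ne (hle c) hne
  have := ENNReal.tsum_lt_tsum hane hle hlt
  rw [hsuma, hsumb] at this
  exact absurd this (lt_irrefl _)

include hp0 hp1 hq0 hq1 hmCt hmC' hmB' hsum hbinom in
lemma measure_fiber (c : ℕ) :
    μ {ω | C' ω = c}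
      = ∑' k, ∑' m, μ {ω | Ct ω = k ∧ B' ω = m} * ENNReal.ofReal (convS p q k m c) := by
  rw [measure_partition μ Ct hmCt (show MeasurableSet {ω | C' ω = c} from hmC' (measurableSet_singleton c))]
  apply tsum_congr
  intro k
  rw [measure_partition μ B' hmB'
    (show MeasurableSet ({ω | C' ω = c} ∩ {ω | Ct ω = k}) from
      (hmC' (measurableSet_singleton c)).inter (hmCt (measurableSet_singleton k)))]
  apply tsum_congr
  intro m
  have hset : {ω | C' ω = c} ∩ {ω | Ct ω = k} ∩ {ω | B' ω = m}
      = {ω | Ct ω = k ∧ B' ω = m} ∩ {ω | C' ω = c} := by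
    ext ω
    simp only [Set.mem_inter_iff, Set.mem_setOf_eq]
    tauto
  rw [hset, measure_key μ hp0 hp1 hq0 hq1 Ct C' B' R' A' hmCt hmC' hmB' hsum hbinom]

include hp0 hp1 hq0 hq1 hmCt hmC' hmB' hsum hbinom in
lemma lint_master (g : ℕ → ℝ≥0∞) :
    ∫⁻ ω, g (C' ω) ∂μ
      = ∑' k, ∑' m, μ {ω | Ct ω = k ∧ B' ω = m}
          * ∑ c ∈ range (k+m+1), g c * ENNReal.ofReal (convS p q k m c) := by
  rw [lint_nat μ C' hmC' g]
  have h1 : ∀ c : ℕ, g c * μ {ω | C' ω = c}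
      = ∑' k, ∑' m, μ {ω | Ct ω = k ∧ B' ω = m} * (g c * ENNReal.ofReal (convS p q k m c)) := by
    intro c
    rw [measure_fiber μ hp0 hp1 hq0 hq1 Ct C' B' R' A' hmCt hmC' hmB' hsum hbinom c,
      ← ENNReal.tsum_mul_left]
    apply tsum_congr
    intro k
    rw [← ENNReal.tsum_mul_left]
    apply tsum_congr
    intro m
    ring
  rw [tsum_congr h1, ENNReal.tsum_comm]
  apply tsum_congr
  intro k
  rw [ENNReal.tsum_comm]
  apply tsum_congr
  intro m
  rw [ENNReal.tsum_mul_left]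
  congr 1
  apply tsum_eq_sum
  intro c hc
  have hz : convS p q k m c = 0 := convS_eq_zero (by
    simp only [Finset.mem_range, not_lt] at hc; omega)
  simp [hz]

end Key

section Eval
variable {p q : ℝ}

lemma conv_eval (hp0 : 0 ≤ p) (hp1 : p ≤ 1) (hq0 : 0 ≤ q) (hq1 : q ≤ 1)
    (gR : ℕ → ℝ) (hg : ∀ c, 0 ≤ gR c) (k m : ℕ) :
    ∑ c ∈ range (k+m+1), ENNReal.ofReal (gR c) * ENNReal.ofReal (convS p q k m c)
      = ENNReal.ofReal (∑ i ∈ range (k+1), ∑ j ∈ range (m+1),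
          gR (i+j) * (binomPMF p k i * binomPMF q m j)) := by
  have h1 : ∀ c ∈ range (k+m+1), ENNReal.ofReal (gR c) * ENNReal.ofReal (convS p q k m c)
      = ENNReal.ofReal (gR c * convS p q k m c) := fun c _ =>
    (ENNReal.ofReal_mul (hg c)).symm
  rw [Finset.sum_congr rfl h1, ← ENNReal.ofReal_sum_of_nonneg (fun c _ =>
    mul_nonneg (hg c) (convS_nonneg hp0 hp1 hq0 hq1 k m c))]
  congr 1
  unfold convS
  have h2 : ∀ c ∈ range (k+m+1), gR c * ∑ i ∈ range (c+1), binomPMF p k i * binomPMF q m (c-i)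
      = ∑ i ∈ range (c+1), gR (i + (c-i)) * (binomPMF p k i * binomPMF q m (c-i)) := by
    intro c _
    rw [Finset.mul_sum]
    apply Finset.sum_congr rfl
    intro i hi
    have : i + (c - i) = c := by
      simp only [Finset.mem_range] at hi; omega
    rw [this]
  rw [Finset.sum_congr rfl h2,
    sum_triangle (k+m+1) (fun i j => gR (i+j) * (binomPMF p k i * binomPMF q m j))]
  have step1 : ∑ i ∈ range (k+m+1), ∑ j ∈ range (k+m+1-i),
        gR (i+j) * (binomPMF p k i * binomPMF q m j)
      = ∑ i ∈ range (k+1), ∑ j ∈ range (k+m+1-i),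
        gR (i+j) * (binomPMF p k i * binomPMF q m j) := by
    symm
    apply Finset.sum_subset (Finset.range_subset_range.mpr (by omega : k+1 ≤ k+m+1))
    intro i _ hi2
    simp only [Finset.mem_range, not_lt] at hi2
    apply Finset.sum_eq_zero
    intro j _
    rw [binomPMF_eq_zero (show k < i by omega)]
    ring
  rw [step1]
  apply Finset.sum_congr rfl
  intro i hi
  simp only [Finset.mem_range] at hi
  symm
  apply Finset.sum_subset (Finset.range_subset_range.mpr (by omega : m+1 ≤ k+m+1-i))
  intro j _ hj2
  simp only [Finset.mem_range, not_lt] at hj2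
  rw [binomPMF_eq_zero (show m < j by omega)]
  ring

lemma W1 (k m : ℕ) :
    ∑ i ∈ range (k+1), ∑ j ∈ range (m+1),
        ((i:ℝ)+(j:ℝ)) * (binomPMF p k i * binomPMF q m j)
      = (k:ℝ)*p + (m:ℝ)*q := by
  have h : (∑ i ∈ range (k+1), ∑ j ∈ range (m+1),
        ((i:ℝ)+(j:ℝ)) * (binomPMF p k i * binomPMF q m j))
      = (∑ i ∈ range (k+1), (i:ℝ)*binomPMF p k i) * (∑ j ∈ range (m+1), binomPMF q m j)
        + (∑ i ∈ range (k+1), binomPMF p k i) * (∑ j ∈ range (m+1), (j:ℝ)*binomPMF q m j) := by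
    rw [Finset.sum_mul_sum, Finset.sum_mul_sum, ← Finset.sum_add_distrib]
    apply Finset.sum_congr rfl
    intro i _
    rw [← Finset.sum_add_distrib]
    apply Finset.sum_congr rfl
    intro j _
    ring
  rw [h, sum_i_binomPMF, sum_binomPMF, sum_i_binomPMF, sum_binomPMF]
  ring

lemma W2 (k m : ℕ) :
    ∑ i ∈ range (k+1), ∑ j ∈ range (m+1),
        ((i:ℝ)+(j:ℝ))^2 * (binomPMF p k i * binomPMF q m j)
      = (k:ℝ)^2*p^2 + (k:ℝ)*(p*(1-p)) + (2*p*q)*((k:ℝ)*(m:ℝ))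
        + (m:ℝ)^2*q^2 + (m:ℝ)*(q*(1-q)) := by
  have h : (∑ i ∈ range (k+1), ∑ j ∈ range (m+1),
        ((i:ℝ)+(j:ℝ))^2 * (binomPMF p k i * binomPMF q m j))
      = (∑ i ∈ range (k+1), (i:ℝ)^2*binomPMF p k i) * (∑ j ∈ range (m+1), binomPMF q m j)
        + 2 * ((∑ i ∈ range (k+1), (i:ℝ)*binomPMF p k i) * (∑ j ∈ range (m+1), (j:ℝ)*binomPMF q m j))
        + (∑ i ∈ range (k+1), binomPMF p k i) * (∑ j ∈ range (m+1), (j:ℝ)^2*binomPMF q m j) := by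
    rw [Finset.sum_mul_sum, Finset.sum_mul_sum, Finset.sum_mul_sum, Finset.mul_sum,
      ← Finset.sum_add_distrib, ← Finset.sum_add_distrib]
    apply Finset.sum_congr rfl
    intro i _
    rw [Finset.mul_sum, ← Finset.sum_add_distrib, ← Finset.sum_add_distrib]
    apply Finset.sum_congr rfl
    intro j _
    ring
  rw [h, sum_sq_binomPMF, sum_binomPMF, sum_i_binomPMF, sum_i_binomPMF, sum_binomPMF,
    sum_sq_binomPMF]
  ring

end Eval

lemma tsum_split (P Q u v : ℕ → ℝ≥0∞) :
    ∑' k, ∑' m, P k * Q m * (u k * v m) = (∑' k, u k * P k) * (∑' m, v m * Q m) := by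
  have h1 : ∀ k, ∑' m, P k * Q m * (u k * v m) = (u k * P k) * ∑' m, v m * Q m := by
    intro k
    rw [← ENNReal.tsum_mul_left]
    exact tsum_congr fun m => by ring
  rw [tsum_congr h1, ENNReal.tsum_mul_right]

lemma tsum_add2 (f g : ℕ → ℕ → ℝ≥0∞) :
    ∑' k, ∑' m, (f k m + g k m) = (∑' k, ∑' m, f k m) + (∑' k, ∑' m, g k m) := by
  rw [← ENNReal.tsum_add]
  exact tsum_congr fun k => ENNReal.tsum_add
set_option maxHeartbeats 2000000 in
/-- For the T-TBS sample-size chain `C_t = R_t + A_t` with, conditionally on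
`C_{t-1}` and the batch size `B_t`, `R_t ~ Binomial (C_{t-1}, p)` and
`A_t ~ Binomial (B_t, q)` independent, `{B_t}` i.i.d. with mean `b` and variance `σ²`,
`q = n (1 - p) / b`, and `C_0 = n`:
`Var[C_t] = α n + σ² q² / (1 - p²) + O(p^t)` where `α = (1 + p - q) / (1 + p)`. -/
theorem ttbs_variance_sample_size
    {Ω : Type*} [MeasurableSpace Ω] (μ : Measure Ω) [IsProbabilityMeasure μ]
    (p q b : ℝ) (n : ℕ)
    (hp : 0 < p) (hp1 : p < 1) (hq0 : 0 < q) (hq1 : q ≤ 1) (hb : 0 < b)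
    (hbq : b * q = (n : ℝ) * (1 - p))
    (C B R A : ℕ → Ω → ℕ)
    (hmC : ∀ t, Measurable (C t)) (hmB : ∀ t, Measurable (B t))
    (hC0 : ∀ ω, C 0 ω = n)
    (hsum : ∀ t ω, C (t + 1) ω = R (t + 1) ω + A (t + 1) ω)
    (hbinom : ∀ t k m i j,
      μ {ω | C t ω = k ∧ B (t + 1) ω = m ∧ R (t + 1) ω = i ∧ A (t + 1) ω = j}
        = μ {ω | C t ω = k ∧ B (t + 1) ω = m}
          * ENNReal.ofReal (binomPMF p k i * binomPMF q m j))
    (hBind : ∀ t k m, μ {ω | C t ω = k ∧ B (t + 1) ω = m}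
        = μ {ω | C t ω = k} * μ {ω | B (t + 1) ω = m})
    (hBiid : ∀ t m, μ {ω | B (t + 1) ω = m} = μ {ω | B 1 ω = m})
    (σ2 : ℝ)
    (hBint : Integrable (fun ω => (B 1 ω : ℝ)) μ)
    (hBmean : ∫ ω, (B 1 ω : ℝ) ∂μ = b)
    (hBint2 : Integrable (fun ω => ((B 1 ω : ℝ) - b) ^ 2) μ)
    (hBvar : ∫ ω, ((B 1 ω : ℝ) - b) ^ 2 ∂μ = σ2)
    (hCint : ∀ t, Integrable (fun ω => (C t ω : ℝ)) μ)
    (hCint2 : ∀ t, Integrable (fun ω => ((C t ω : ℝ)) ^ 2) μ) :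
    ∃ K : ℝ, 0 ≤ K ∧ ∀ t : ℕ, 1 ≤ t →
      |(∫ ω, ((C t ω : ℝ) - ∫ ω', (C t ω' : ℝ) ∂μ) ^ 2 ∂μ)
          - (((1 + p - q) / (1 + p)) * n + σ2 * q ^ 2 / (1 - p ^ 2))| ≤ K * p ^ t := by
  have hp0 : (0:ℝ) ≤ p := hp.le
  have hq0' : (0:ℝ) ≤ q := hq0.le
  have hE1nn : ∀ t, 0 ≤ ∫ ω, (C t ω : ℝ) ∂μ :=
    fun t => integral_nonneg (fun ω => Nat.cast_nonneg _)
  have hE2nn : ∀ t, 0 ≤ ∫ ω, (C t ω : ℝ)^2 ∂μ := fun t => integral_nonneg (fun ω => sq_nonneg _)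
  have hσnn : 0 ≤ σ2 := hBvar ▸ integral_nonneg (fun ω => sq_nonneg _)
  -- lintegral identities
  have hL1 : ∀ t, ∫⁻ ω, ((C t ω : ℝ≥0∞)) ∂μ = ENNReal.ofReal (∫ ω, (C t ω : ℝ) ∂μ) := by
    intro t
    rw [lintegral_congr (fun ω => (ENNReal.ofReal_natCast (C t ω)).symm)]
    exact (ofReal_integral_eq_lintegral_ofReal (hCint t)
      (Filter.Eventually.of_forall fun ω => Nat.cast_nonneg _)).symm
  have hL2 : ∀ t, ∫⁻ ω, ((C t ω : ℝ≥0∞))^2 ∂μ = ENNReal.ofReal (∫ ω, (C t ω : ℝ)^2 ∂μ) := by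
    intro t
    rw [lintegral_congr (fun ω => by
      rw [← ENNReal.ofReal_natCast (C t ω), ← ENNReal.ofReal_pow (Nat.cast_nonneg _)])]
    exact (ofReal_integral_eq_lintegral_ofReal (hCint2 t)
      (Filter.Eventually.of_forall fun ω => sq_nonneg _)).symm
  have hBsq : Integrable (fun ω => (B 1 ω:ℝ)^2) μ := by
    have h : (fun ω => (B 1 ω:ℝ)^2)
        = fun ω => ((B 1 ω:ℝ) - b)^2 + ((2*b) * (B 1 ω:ℝ) + (-(b^2))) := by
      funext ω; ring
    rw [h]
    exact hBint2.add ((hBint.const_mul (2*b)).add (integrable_const _))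
  have hBsq_val : ∫ ω, (B 1 ω:ℝ)^2 ∂μ = σ2 + b^2 := by
    have h : (fun ω => ((B 1 ω:ℝ) - b)^2)
        = fun ω => (B 1 ω:ℝ)^2 + ((-(2*b)) * (B 1 ω:ℝ) + b^2) := by
      funext ω; ring
    rw [h] at hBvar
    have hg1 : Integrable (fun ω => (-(2*b)) * (B 1 ω:ℝ)) μ := hBint.const_mul _
    have hg : Integrable (fun ω => (-(2*b)) * (B 1 ω:ℝ) + b^2) μ := hg1.add (integrable_const _)
    rw [integral_add hBsq hg, integral_add hg1 (integrable_const _),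
      integral_const_mul, hBmean, integral_const] at hBvar
    simp only [measure_univ, probReal_univ, ENNReal.toReal_one, smul_eq_mul, one_mul] at hBvar
    linarith
  have hLB1 : ∫⁻ ω, ((B 1 ω : ℝ≥0∞)) ∂μ = ENNReal.ofReal b := by
    rw [lintegral_congr (fun ω => (ENNReal.ofReal_natCast (B 1 ω)).symm), ← hBmean]
    exact (ofReal_integral_eq_lintegral_ofReal hBint
      (Filter.Eventually.of_forall fun ω => Nat.cast_nonneg _)).symm
  have hLB2 : ∫⁻ ω, ((B 1 ω : ℝ≥0∞))^2 ∂μ = ENNReal.ofReal (σ2 + b^2) := by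
    rw [lintegral_congr (fun ω => by
      rw [← ENNReal.ofReal_natCast (B 1 ω), ← ENNReal.ofReal_pow (Nat.cast_nonneg _)]), ← hBsq_val]
    exact (ofReal_integral_eq_lintegral_ofReal hBsq
      (Filter.Eventually.of_forall fun ω => sq_nonneg _)).symm
  -- tsum identities
  have hPs : ∀ t, ∑' k, μ {ω | C t ω = k} = 1 := by
    intro t
    have h := measure_partition μ (C t) (hmC t) MeasurableSet.univ
    simpa [measure_univ] using h.symm
  have hQs : ∑' m, μ {ω | B 1 ω = m} = 1 := by
    have h := measure_partition μ (B 1) (hmB 1) MeasurableSet.univ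
    simpa [measure_univ] using h.symm
  have hP1 : ∀ t, ∑' k : ℕ, (k:ℝ≥0∞) * μ {ω | C t ω = k}
      = ENNReal.ofReal (∫ ω, (C t ω : ℝ) ∂μ) := by
    intro t
    rw [← lint_nat μ (C t) (hmC t) (fun c => (c:ℝ≥0∞))]
    exact hL1 t
  have hP2 : ∀ t, ∑' k : ℕ, (k:ℝ≥0∞)^2 * μ {ω | C t ω = k}
      = ENNReal.ofReal (∫ ω, (C t ω : ℝ)^2 ∂μ) := by
    intro t
    rw [← lint_nat μ (C t) (hmC t) (fun c => (c:ℝ≥0∞)^2)]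
    exact hL2 t
  have hQ1 : ∑' m : ℕ, (m:ℝ≥0∞) * μ {ω | B 1 ω = m} = ENNReal.ofReal b := by
    rw [← lint_nat μ (B 1) (hmB 1) (fun c => (c:ℝ≥0∞))]
    exact hLB1
  have hQ2 : ∑' m : ℕ, (m:ℝ≥0∞)^2 * μ {ω | B 1 ω = m} = ENNReal.ofReal (σ2 + b^2) := by
    rw [← lint_nat μ (B 1) (hmB 1) (fun c => (c:ℝ≥0∞)^2)]
    exact hLB2
  -- master formula
  have master : ∀ (t : ℕ) (g : ℕ → ℝ≥0∞),
      ∫⁻ ω, g (C (t+1) ω) ∂μ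
        = ∑' k, ∑' m, μ {ω | C t ω = k} * μ {ω | B 1 ω = m}
            * ∑ c ∈ range (k+m+1), g c * ENNReal.ofReal (convS p q k m c) := by
    intro t g
    rw [lint_master μ hp0 hp1.le hq0' hq1 (C t) (C (t+1)) (B (t+1)) (R (t+1)) (A (t+1))
      (hmC t) (hmC (t+1)) (hmB (t+1)) (fun ω => hsum t ω) (fun k m i j => hbinom t k m i j)]
    exact tsum_congr fun k => tsum_congr fun m => by rw [hBind t k m, hBiid t m]
  -- first moment recursion
  have hrec1 : ∀ t, ∫ ω, (C (t+1) ω:ℝ) ∂μ = p * (∫ ω, (C t ω:ℝ) ∂μ) + q * b := by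
    intro t
    have h0 := master t (fun c => (c:ℝ≥0∞))
    rw [hL1 (t+1)] at h0
    have hin : ∀ k m : ℕ, ∑ c ∈ range (k+m+1), (c:ℝ≥0∞) * ENNReal.ofReal (convS p q k m c)
        = ENNReal.ofReal ((k:ℝ)*p + (m:ℝ)*q) := by
      intro k m
      rw [Finset.sum_congr rfl (fun c _ => by rw [← ENNReal.ofReal_natCast c]),
        conv_eval hp0 hp1.le hq0' hq1 (fun c => ((c:ℕ):ℝ)) (fun c => Nat.cast_nonneg c) k m]
      congr 1
      rw [← W1 (p := p) (q := q) k m]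
      exact Finset.sum_congr rfl fun i _ => Finset.sum_congr rfl fun j _ => by push_cast; ring
    simp only [hin] at h0
    have hsplit : ∀ k m : ℕ,
        μ {ω | C t ω = k} * μ {ω | B 1 ω = m} * ENNReal.ofReal ((k:ℝ)*p + (m:ℝ)*q)
        = μ {ω | C t ω = k} * μ {ω | B 1 ω = m} * (((k:ℝ≥0∞) * ENNReal.ofReal p) * 1)
          + μ {ω | C t ω = k} * μ {ω | B 1 ω = m}
            * ((1:ℝ≥0∞) * ((m:ℝ≥0∞) * ENNReal.ofReal q)) := by
      intro k m
      have g1 : ENNReal.ofReal ((k:ℝ)*p) = (k:ℝ≥0∞) * ENNReal.ofReal p := by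
        rw [ENNReal.ofReal_mul (Nat.cast_nonneg k), ENNReal.ofReal_natCast]
      have g2 : ENNReal.ofReal ((m:ℝ)*q) = (m:ℝ≥0∞) * ENNReal.ofReal q := by
        rw [ENNReal.ofReal_mul (Nat.cast_nonneg m), ENNReal.ofReal_natCast]
      rw [ENNReal.ofReal_add (by positivity) (by positivity), g1, g2]
      ring
    simp only [hsplit] at h0
    rw [tsum_add2, tsum_split, tsum_split] at h0
    have e1 : ∑' k : ℕ, ((k:ℝ≥0∞) * ENNReal.ofReal p) * μ {ω | C t ω = k}
        = ENNReal.ofReal p * ENNReal.ofReal (∫ ω, (C t ω:ℝ) ∂μ) := by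
      rw [← hP1 t, ← ENNReal.tsum_mul_left]
      exact tsum_congr fun k => by ring
    have e2 : ∑' m : ℕ, (1:ℝ≥0∞) * μ {ω | B 1 ω = m} = 1 := by
      simpa [one_mul] using hQs
    have e3 : ∑' k : ℕ, (1:ℝ≥0∞) * μ {ω | C t ω = k} = 1 := by
      simpa [one_mul] using hPs t
    have e4 : ∑' m : ℕ, ((m:ℝ≥0∞) * ENNReal.ofReal q) * μ {ω | B 1 ω = m}
        = ENNReal.ofReal q * ENNReal.ofReal b := by
      rw [← hQ1, ← ENNReal.tsum_mul_left]
      exact tsum_congr fun m => by ring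
    rw [e1, e2, e3, e4, mul_one, one_mul, ← ENNReal.ofReal_mul hp0, ← ENNReal.ofReal_mul hq0',
      ← ENNReal.ofReal_add (by positivity) (by positivity)] at h0
    exact (ENNReal.ofReal_eq_ofReal_iff (hE1nn (t+1)) (by positivity)).mp h0
  -- E1 t = n
  have hE1 : ∀ t, ∫ ω, (C t ω:ℝ) ∂μ = (n:ℝ) := by
    intro t
    induction t with
    | zero =>
      have h : (fun ω => (C 0 ω:ℝ)) = fun _ => (n:ℝ) := funext fun ω => by rw [hC0 ω]
      rw [h, integral_const]
      simp
    | succ t ih =>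
      rw [hrec1 t, ih]
      have : q * b = (n:ℝ) * (1 - p) := by linarith [hbq]
      linarith
  -- second moment recursion
  have hrec2 : ∀ t, ∫ ω, (C (t+1) ω:ℝ)^2 ∂μ
      = p^2 * (∫ ω, (C t ω:ℝ)^2 ∂μ) + (p*(1-p)) * (n:ℝ) + (2*p*q) * ((n:ℝ) * b)
        + q^2 * (σ2 + b^2) + (q*(1-q)) * b := by
    intro t
    have h0 := master t (fun c => (c:ℝ≥0∞)^2)
    rw [hL2 (t+1)] at h0
    have hin : ∀ k m : ℕ, ∑ c ∈ range (k+m+1), (c:ℝ≥0∞)^2 * ENNReal.ofReal (convS p q k m c)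
        = ENNReal.ofReal ((k:ℝ)^2*p^2 + (k:ℝ)*(p*(1-p)) + (2*p*q)*((k:ℝ)*(m:ℝ))
            + (m:ℝ)^2*q^2 + (m:ℝ)*(q*(1-q))) := by
      intro k m
      rw [Finset.sum_congr rfl (fun c _ => by
        rw [← ENNReal.ofReal_natCast c, ← ENNReal.ofReal_pow (Nat.cast_nonneg _)]),
        conv_eval hp0 hp1.le hq0' hq1 (fun c => ((c:ℕ):ℝ)^2) (fun c => sq_nonneg _) k m]
      congr 1
      rw [← W2 (p := p) (q := q) k m]
      exact Finset.sum_congr rfl fun i _ => Finset.sum_congr rfl fun j _ => by push_cast; ring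
    simp only [hin] at h0
    have h1p : 0 ≤ p * (1-p) := mul_nonneg hp0 (by linarith)
    have h1q : 0 ≤ q * (1-q) := mul_nonneg hq0' (by linarith)
    have hsplit : ∀ k m : ℕ,
        μ {ω | C t ω = k} * μ {ω | B 1 ω = m}
          * ENNReal.ofReal ((k:ℝ)^2*p^2 + (k:ℝ)*(p*(1-p)) + (2*p*q)*((k:ℝ)*(m:ℝ))
              + (m:ℝ)^2*q^2 + (m:ℝ)*(q*(1-q)))
        = μ {ω | C t ω = k} * μ {ω | B 1 ω = m}
              * (((k:ℝ≥0∞)^2 * ENNReal.ofReal (p^2)) * 1)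
          + μ {ω | C t ω = k} * μ {ω | B 1 ω = m}
              * (((k:ℝ≥0∞) * ENNReal.ofReal (p*(1-p))) * 1)
          + μ {ω | C t ω = k} * μ {ω | B 1 ω = m}
              * (((k:ℝ≥0∞) * ENNReal.ofReal (2*p*q)) * ((m:ℝ≥0∞) * 1))
          + μ {ω | C t ω = k} * μ {ω | B 1 ω = m}
              * ((1:ℝ≥0∞) * ((m:ℝ≥0∞)^2 * ENNReal.ofReal (q^2)))
          + μ {ω | C t ω = k} * μ {ω | B 1 ω = m}
              * ((1:ℝ≥0∞) * ((m:ℝ≥0∞) * ENNReal.ofReal (q*(1-q)))) := by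
      intro k m
      have g1 : ENNReal.ofReal ((k:ℝ)^2*p^2) = (k:ℝ≥0∞)^2 * ENNReal.ofReal (p^2) := by
        rw [ENNReal.ofReal_mul (sq_nonneg ((k:ℝ))), ENNReal.ofReal_pow (Nat.cast_nonneg k),
          ENNReal.ofReal_natCast]
      have g2 : ENNReal.ofReal ((k:ℝ)*(p*(1-p))) = (k:ℝ≥0∞) * ENNReal.ofReal (p*(1-p)) := by
        rw [ENNReal.ofReal_mul (Nat.cast_nonneg k), ENNReal.ofReal_natCast]
      have g3 : ENNReal.ofReal ((2*p*q)*((k:ℝ)*(m:ℝ)))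
          = ((k:ℝ≥0∞) * ENNReal.ofReal (2*p*q)) * (m:ℝ≥0∞) := by
        rw [show (2*p*q)*((k:ℝ)*(m:ℝ)) = (((k:ℝ))*(2*p*q))*(m:ℝ) from by ring,
          ENNReal.ofReal_mul (by positivity), ENNReal.ofReal_mul (Nat.cast_nonneg k),
          ENNReal.ofReal_natCast, ENNReal.ofReal_natCast]
      have g4 : ENNReal.ofReal ((m:ℝ)^2*q^2) = (m:ℝ≥0∞)^2 * ENNReal.ofReal (q^2) := by
        rw [ENNReal.ofReal_mul (sq_nonneg ((m:ℝ))), ENNReal.ofReal_pow (Nat.cast_nonneg m),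
          ENNReal.ofReal_natCast]
      have g5 : ENNReal.ofReal ((m:ℝ)*(q*(1-q))) = (m:ℝ≥0∞) * ENNReal.ofReal (q*(1-q)) := by
        rw [ENNReal.ofReal_mul (Nat.cast_nonneg m), ENNReal.ofReal_natCast]
      rw [ENNReal.ofReal_add (by positivity) (by positivity),
        ENNReal.ofReal_add (by positivity) (by positivity),
        ENNReal.ofReal_add (by positivity) (by positivity),
        ENNReal.ofReal_add (by positivity) (by positivity), g1, g2, g3, g4, g5]
      ring
    simp only [hsplit] at h0
    rw [tsum_add2, tsum_add2, tsum_add2, tsum_add2,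
      tsum_split, tsum_split, tsum_split, tsum_split, tsum_split] at h0
    have f1 : ∑' k : ℕ, ((k:ℝ≥0∞)^2 * ENNReal.ofReal (p^2)) * μ {ω | C t ω = k}
        = ENNReal.ofReal (p^2) * ENNReal.ofReal (∫ ω, (C t ω:ℝ)^2 ∂μ) := by
      rw [← hP2 t, ← ENNReal.tsum_mul_left]; exact tsum_congr fun k => by ring
    have f2 : ∑' k : ℕ, ((k:ℝ≥0∞) * ENNReal.ofReal (p*(1-p))) * μ {ω | C t ω = k}
        = ENNReal.ofReal (p*(1-p)) * ENNReal.ofReal (∫ ω, (C t ω:ℝ) ∂μ) := by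
      rw [← hP1 t, ← ENNReal.tsum_mul_left]; exact tsum_congr fun k => by ring
    have f3 : ∑' k : ℕ, ((k:ℝ≥0∞) * ENNReal.ofReal (2*p*q)) * μ {ω | C t ω = k}
        = ENNReal.ofReal (2*p*q) * ENNReal.ofReal (∫ ω, (C t ω:ℝ) ∂μ) := by
      rw [← hP1 t, ← ENNReal.tsum_mul_left]; exact tsum_congr fun k => by ring
    have f4 : ∑' m : ℕ, ((m:ℝ≥0∞) * 1) * μ {ω | B 1 ω = m} = ENNReal.ofReal b := by
      rw [← hQ1]; exact tsum_congr fun m => by ring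
    have f5 : ∑' m : ℕ, ((m:ℝ≥0∞)^2 * ENNReal.ofReal (q^2)) * μ {ω | B 1 ω = m}
        = ENNReal.ofReal (q^2) * ENNReal.ofReal (σ2 + b^2) := by
      rw [← hQ2, ← ENNReal.tsum_mul_left]; exact tsum_congr fun m => by ring
    have f6 : ∑' m : ℕ, ((m:ℝ≥0∞) * ENNReal.ofReal (q*(1-q))) * μ {ω | B 1 ω = m}
        = ENNReal.ofReal (q*(1-q)) * ENNReal.ofReal b := by
      rw [← hQ1, ← ENNReal.tsum_mul_left]; exact tsum_congr fun m => by ring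
    have e2 : ∑' m : ℕ, (1:ℝ≥0∞) * μ {ω | B 1 ω = m} = 1 := by simpa [one_mul] using hQs
    have e3 : ∑' k : ℕ, (1:ℝ≥0∞) * μ {ω | C t ω = k} = 1 := by simpa [one_mul] using hPs t
    rw [f1, f2, f3, f4, f5, f6, e2, e3, hE1 t] at h0
    have hσb : 0 ≤ σ2 + b^2 := by positivity
    rw [mul_one, mul_one, one_mul, one_mul,
      ← ENNReal.ofReal_mul (by positivity), ← ENNReal.ofReal_mul h1p,
      ← ENNReal.ofReal_mul (by positivity), ← ENNReal.ofReal_mul (by positivity),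
      ← ENNReal.ofReal_mul (by positivity), ← ENNReal.ofReal_mul h1q,
      ← ENNReal.ofReal_add (by positivity) (by positivity),
      ← ENNReal.ofReal_add (by positivity) (by positivity),
      ← ENNReal.ofReal_add (by positivity) (by positivity),
      ← ENNReal.ofReal_add (by positivity) (by positivity)] at h0
    have := (ENNReal.ofReal_eq_ofReal_iff (hE2nn (t+1)) (by positivity)).mp h0
    rw [this]
    ring
  -- E2 0
  have hE20 : ∫ ω, (C 0 ω:ℝ)^2 ∂μ = (n:ℝ)^2 := by
    have h : (fun ω => (C 0 ω:ℝ)^2) = fun _ => (n:ℝ)^2 := funext fun ω => by rw [hC0 ω]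
    rw [h, integral_const]
    simp
  -- closed form
  set VT : ℝ := ((1 + p - q) / (1 + p)) * n + σ2 * q ^ 2 / (1 - p ^ 2) with hVT
  have hVTnn : 0 ≤ VT := by
    apply add_nonneg
    · apply mul_nonneg (div_nonneg (by linarith) (by linarith)) (Nat.cast_nonneg n)
    · apply div_nonneg (mul_nonneg hσnn (sq_nonneg q)) (by nlinarith)
  have h1p2 : (0:ℝ) < 1 - p^2 := by nlinarith
  have hfixeq : VT * (1 - p^2)
      = (p*(1-p)) * (n:ℝ) + (2*p*q) * ((n:ℝ) * b) + q^2 * (σ2 + b^2)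
        + (q*(1-q)) * b - (1 - p^2) * (n:ℝ)^2 := by
    have key : q * b = (n:ℝ) * (1 - p) := by linarith
    have hne1 : (1:ℝ)+p ≠ 0 := by linarith
    have hne2 : (1:ℝ)-p^2 ≠ 0 := ne_of_gt h1p2
    have expand : VT * (1 - p^2) = (1+p-q)*(n:ℝ)*(1-p) + σ2*q^2 := by
      rw [hVT]
      field_simp
      ring
    rw [expand]
    linear_combination (-(2*p*(n:ℝ) + q*b + (n:ℝ)*(1-p) + (1-q))) * key
  have hV : ∀ t, (∫ ω, (C t ω:ℝ)^2 ∂μ) - (n:ℝ)^2 - VT = -VT * p^(2*t) := by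
    intro t
    induction t with
    | zero => simp [hE20]
    | succ t ih =>
      have hps : p^(2*(t+1)) = p^(2*t) * p^2 := by rw [← pow_add]; ring_nf
      rw [hps]
      linear_combination (hrec2 t) + p^2 * ih - hfixeq
  -- variance identity
  have hvar : ∀ t, ∫ ω, ((C t ω:ℝ) - ∫ ω', (C t ω':ℝ) ∂μ)^2 ∂μ
      = (∫ ω, (C t ω:ℝ)^2 ∂μ) - (n:ℝ)^2 := by
    intro t
    rw [hE1 t]
    have hexp : (fun ω => ((C t ω:ℝ) - (n:ℝ))^2)
        = fun ω => (C t ω:ℝ)^2 + ((-(2*(n:ℝ))) * (C t ω:ℝ) + (n:ℝ)^2) := funext fun ω => by ring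
    have hg1 : Integrable (fun ω => (-(2*(n:ℝ))) * (C t ω:ℝ)) μ := (hCint t).const_mul _
    have hg : Integrable (fun ω => (-(2*(n:ℝ))) * (C t ω:ℝ) + (n:ℝ)^2) μ :=
      hg1.add (integrable_const _)
    rw [hexp, integral_add (hCint2 t) hg,
      integral_add hg1 (integrable_const _), integral_const_mul, hE1 t,
      integral_const]
    simp only [measure_univ, probReal_univ, ENNReal.toReal_one, smul_eq_mul, one_mul]
    ring
  refine ⟨VT, hVTnn, ?_⟩
  intro t ht
  rw [hvar t, hV t, abs_mul, abs_neg, abs_of_nonneg hVTnn,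
    abs_of_nonneg (by positivity : (0:ℝ) ≤ p^(2*t))]
  have hple : p^(2*t) ≤ p^t := by
    rw [two_mul, pow_add]
    have h1 : p^t ≤ 1 := pow_le_one₀ hp0 hp1.le
    nlinarith [pow_nonneg hp0 t]
  exact mul_le_mul_of_nonneg_left hple hVTnn
end

section
/- Under the T-TBS assumptions with C_0 = n and bounded batch sizes of upper-support ratio r < ∞, for ε > r − 1, P(C_t ≥ (1+ε)n) ≤ e^{−n ν⁺} (1 + O(nε p^t)) where ν⁺ = (1+ε)ln((1+ε)/r) − (1+ε−r). -/
open MeasureTheory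

lemma binomPMF_nonneg_s13 {x : ℝ} (hx0 : 0 ≤ x) (hx1 : x ≤ 1) (k i : ℕ) : 0 ≤ binomPMF x k i := by
  unfold binomPMF
  split
  · have h1 : (0:ℝ) ≤ 1 - x := by linarith
    exact mul_nonneg (mul_nonneg (Nat.cast_nonneg _) (pow_nonneg hx0 _)) (pow_nonneg h1 _)
  · exact le_rfl

lemma binom_sum {x u : ℝ} (hx0 : 0 ≤ x) (hx1 : x ≤ 1) (hu : 0 ≤ u) (k : ℕ) :
    ∑' i : ℕ, ENNReal.ofReal (binomPMF x k i * u ^ i)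
      = ENNReal.ofReal ((1 - x + x * u) ^ k) := by
  rw [tsum_eq_sum (s := Finset.range (k + 1)) (by
    intro i hi
    have : ¬ i ≤ k := by simpa using fun h => hi (Finset.mem_range.2 (Nat.lt_succ_of_le h))
    simp [binomPMF, this])]
  rw [← ENNReal.ofReal_sum_of_nonneg (fun i _ => by
    have := binomPMF_nonneg_s13 hx0 hx1 k i; positivity)]
  congr 1
  have h : (1 - x + x * u) ^ k = (x * u + (1 - x)) ^ k := by ring_nf
  rw [h, add_pow]
  refine Finset.sum_congr rfl (fun i hi => ?_)
  have hik : i ≤ k := Nat.lt_succ_iff.mp (Finset.mem_range.mp hi)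
  simp only [binomPMF, if_pos hik]
  rw [mul_pow]
  ring

/-- For the T-TBS sample-size chain started at `C_0 = n` with i.i.d. batch
sizes of mean `b` bounded by `b* = r b` (upper-support ratio `r ≥ 1`), for `ε > r - 1`:
`P(C_t ≥ (1+ε) n) ≤ exp (-n ν⁺) (1 + O(n ε p^t))`, where
`ν⁺ = (1+ε) log ((1+ε)/r) - (1+ε-r)`. -/
theorem ttbs_upper_deviation_bound_bounded_batches
    {Ω : Type*} [MeasurableSpace Ω] (μ : Measure Ω) [IsProbabilityMeasure μ]
    (p q b : ℝ) (n : ℕ)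
    (hp : 0 < p) (hp1 : p < 1) (hq0 : 0 < q) (hq1 : q ≤ 1) (hb : 0 < b)
    (hbq : b * q = (n : ℝ) * (1 - p))
    (C B R A : ℕ → Ω → ℕ)
    (hmC : ∀ t, Measurable (C t)) (hmB : ∀ t, Measurable (B t))
    (hC0 : ∀ ω, C 0 ω = n)
    (hsum : ∀ t ω, C (t + 1) ω = R (t + 1) ω + A (t + 1) ω)
    (hbinom : ∀ t k m i j,
      μ {ω | C t ω = k ∧ B (t + 1) ω = m ∧ R (t + 1) ω = i ∧ A (t + 1) ω = j}
        = μ {ω | C t ω = k ∧ B (t + 1) ω = m}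
          * ENNReal.ofReal (binomPMF p k i * binomPMF q m j))
    (hBind : ∀ t k m, μ {ω | C t ω = k ∧ B (t + 1) ω = m}
        = μ {ω | C t ω = k} * μ {ω | B (t + 1) ω = m})
    (hBiid : ∀ t m, μ {ω | B (t + 1) ω = m} = μ {ω | B 1 ω = m})
    (hBint : Integrable (fun ω => (B 1 ω : ℝ)) μ)
    (hBmean : ∫ ω, (B 1 ω : ℝ) ∂μ = b)
    (r : ℝ) (hr : 1 ≤ r)
    (hBbdd : ∀ᵐ ω ∂μ, (B 1 ω : ℝ) ≤ r * b)
    (ε : ℝ) (hε : r - 1 < ε) :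
    ∃ K : ℝ, 0 ≤ K ∧ ∀ t : ℕ,
      (μ {ω | (1 + ε) * (n : ℝ) ≤ (C t ω : ℝ)}).toReal ≤
        Real.exp (-(n : ℝ) * ((1 + ε) * Real.log ((1 + ε) / r) - (1 + ε - r)))
          * (1 + K * (n : ℝ) * ε * p ^ t) := by
  have hr0 : (0:ℝ) < r := lt_of_lt_of_le one_pos hr
  have hε0 : (0:ℝ) ≤ ε := le_of_lt (lt_of_le_of_lt (by linarith) hε)
  have hp0 : (0:ℝ) ≤ p := hp.le
  have hq0' : (0:ℝ) ≤ q := hq0.le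
  -- the generating function
  set G : ℕ → ℝ → ENNReal := fun t u => ∑' k : ℕ, μ {ω | C t ω = k} * ENNReal.ofReal (u ^ k)
    with hGdef
  -- B is a.s. bounded by r*b
  have hBzero : ∀ m : ℕ, r * b < (m:ℝ) → μ {ω | B 1 ω = m} = 0 := by
    intro m hm
    have h0 : μ {ω | ¬ ((B 1 ω : ℝ) ≤ r * b)} = 0 := by
      simpa [ae_iff] using hBbdd
    refine measure_mono_null (fun ω hω => ?_) h0
    simp only [Set.mem_setOf_eq] at hω ⊢
    rw [hω]
    exact not_le.2 hm
  -- the batch factor bound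
  have hψ : ∀ u : ℝ, 1 ≤ u →
      ∑' m : ℕ, μ {ω | B 1 ω = m} * ENNReal.ofReal ((1 - q + q * u) ^ m)
        ≤ ENNReal.ofReal (Real.exp (q * (u - 1) * (r * b))) := by
    intro u hu
    have hsum1 : ∑' m : ℕ, μ {ω | B 1 ω = m} ≤ 1 := by
      have hdis : Pairwise (Function.onFun Disjoint (fun m : ℕ => {ω | B 1 ω = m})) := by
        intro i j hij
        refine Set.disjoint_left.2 fun ω h1 h2 => hij ?_
        simp only [Set.mem_setOf_eq] at h1 h2
        rw [← h1, ← h2]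
      rw [← measure_iUnion hdis (fun m => hmB 1 (measurableSet_singleton m))]
      exact prob_le_one
    have hterm : ∀ m : ℕ, μ {ω | B 1 ω = m} * ENNReal.ofReal ((1 - q + q * u) ^ m)
        ≤ μ {ω | B 1 ω = m} * ENNReal.ofReal (Real.exp (q * (u - 1) * (r * b))) := by
      intro m
      rcases le_or_gt (m:ℝ) (r * b) with hm | hm
      · refine mul_le_mul_right (ENNReal.ofReal_le_ofReal ?_) _
        have hqu : (0:ℝ) ≤ q * (u - 1) := mul_nonneg hq0' (by linarith)
        have h1 : (1 - q + q * u) ^ m ≤ Real.exp (q * (u - 1)) ^ m := by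
          apply pow_le_pow_left₀ (by nlinarith)
          have := Real.add_one_le_exp (q * (u - 1))
          linarith [this]
        have h2 : Real.exp (q * (u - 1)) ^ m = Real.exp ((m:ℝ) * (q * (u - 1))) :=
          (Real.exp_nat_mul _ m).symm
        calc (1 - q + q * u) ^ m ≤ Real.exp (q * (u - 1)) ^ m := h1
          _ = Real.exp ((m:ℝ) * (q * (u - 1))) := h2
          _ ≤ Real.exp (q * (u - 1) * (r * b)) := by
              apply Real.exp_le_exp.2
              nlinarith
      · rw [hBzero m hm]
        simp
    calc ∑' m : ℕ, μ {ω | B 1 ω = m} * ENNReal.ofReal ((1 - q + q * u) ^ m)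
        ≤ ∑' m : ℕ, μ {ω | B 1 ω = m} * ENNReal.ofReal (Real.exp (q * (u - 1) * (r * b))) :=
          Summable.tsum_le_tsum hterm ENNReal.summable ENNReal.summable
      _ = (∑' m : ℕ, μ {ω | B 1 ω = m}) * ENNReal.ofReal (Real.exp (q * (u - 1) * (r * b))) :=
          ENNReal.tsum_mul_right
      _ ≤ 1 * ENNReal.ofReal (Real.exp (q * (u - 1) * (r * b))) := mul_le_mul_left hsum1 _
      _ = _ := one_mul _
  -- one-step recursion bound
  have hstep : ∀ t : ℕ, ∀ u : ℝ, 1 ≤ u →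
      G (t+1) u ≤ G t (1 - p + p * u) * ENNReal.ofReal (Real.exp (q * (u - 1) * (r * b))) := by
    intro t u hu
    have hu0 : (0:ℝ) ≤ u := le_trans zero_le_one hu
    have hsub : ∀ c : ℕ, μ {ω | C (t+1) ω = c} ≤
        ∑' σ : ℕ × ℕ × ℕ × ℕ, (if σ.2.2.1 + σ.2.2.2 = c then
          μ {ω | C t ω = σ.1 ∧ B (t+1) ω = σ.2.1 ∧ R (t+1) ω = σ.2.2.1 ∧ A (t+1) ω = σ.2.2.2}
          else 0) := by
      intro c
      have hcover : {ω | C (t+1) ω = c} ⊆ ⋃ σ : ℕ × ℕ × ℕ × ℕ,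
          (if σ.2.2.1 + σ.2.2.2 = c then
            {ω | C t ω = σ.1 ∧ B (t+1) ω = σ.2.1 ∧ R (t+1) ω = σ.2.2.1 ∧ A (t+1) ω = σ.2.2.2}
            else (∅ : Set Ω)) := by
        intro ω hω
        refine Set.mem_iUnion.2 ⟨(C t ω, B (t+1) ω, R (t+1) ω, A (t+1) ω), ?_⟩
        have hc : R (t+1) ω + A (t+1) ω = c := by rw [← hsum t ω]; exact hω
        simp only [if_pos hc]
        exact ⟨rfl, rfl, rfl, rfl⟩
      refine le_trans (measure_mono hcover) (le_trans (measure_iUnion_le _) ?_)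
      refine le_of_eq (tsum_congr fun σ => ?_)
      split
      · rfl
      · exact measure_empty
    -- value of the quadruple measure
    have hquad : ∀ σ : ℕ × ℕ × ℕ × ℕ,
        μ {ω | C t ω = σ.1 ∧ B (t+1) ω = σ.2.1 ∧ R (t+1) ω = σ.2.2.1 ∧ A (t+1) ω = σ.2.2.2}
          = μ {ω | C t ω = σ.1} * μ {ω | B 1 ω = σ.2.1}
            * ENNReal.ofReal (binomPMF p σ.1 σ.2.2.1 * binomPMF q σ.2.1 σ.2.2.2) := by
      intro σ
      rw [hbinom t σ.1 σ.2.1 σ.2.2.1 σ.2.2.2, hBind t σ.1 σ.2.1, hBiid t σ.2.1]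
    calc G (t+1) u
        = ∑' c : ℕ, μ {ω | C (t+1) ω = c} * ENNReal.ofReal (u ^ c) := rfl
      _ ≤ ∑' c : ℕ, (∑' σ : ℕ × ℕ × ℕ × ℕ, (if σ.2.2.1 + σ.2.2.2 = c then
            μ {ω | C t ω = σ.1 ∧ B (t+1) ω = σ.2.1 ∧ R (t+1) ω = σ.2.2.1 ∧ A (t+1) ω = σ.2.2.2}
            else 0)) * ENNReal.ofReal (u ^ c) :=
          Summable.tsum_le_tsum (fun c => mul_le_mul_left (hsub c) _) ENNReal.summable ENNReal.summable
      _ = ∑' c : ℕ, ∑' σ : ℕ × ℕ × ℕ × ℕ, (if σ.2.2.1 + σ.2.2.2 = c then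
            (μ {ω | C t ω = σ.1} * μ {ω | B 1 ω = σ.2.1}
              * ENNReal.ofReal (binomPMF p σ.1 σ.2.2.1 * binomPMF q σ.2.1 σ.2.2.2))
              * ENNReal.ofReal (u ^ c) else 0) := by
          refine tsum_congr fun c => ?_
          rw [← ENNReal.tsum_mul_right]
          refine tsum_congr fun σ => ?_
          rw [ite_mul, zero_mul, hquad σ]
      _ = ∑' σ : ℕ × ℕ × ℕ × ℕ, ∑' c : ℕ, (if σ.2.2.1 + σ.2.2.2 = c then
            (μ {ω | C t ω = σ.1} * μ {ω | B 1 ω = σ.2.1}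
              * ENNReal.ofReal (binomPMF p σ.1 σ.2.2.1 * binomPMF q σ.2.1 σ.2.2.2))
              * ENNReal.ofReal (u ^ c) else 0) := ENNReal.tsum_comm
      _ = ∑' σ : ℕ × ℕ × ℕ × ℕ,
            (μ {ω | C t ω = σ.1} * ENNReal.ofReal (binomPMF p σ.1 σ.2.2.1 * u ^ σ.2.2.1))
            * (μ {ω | B 1 ω = σ.2.1} * ENNReal.ofReal (binomPMF q σ.2.1 σ.2.2.2 * u ^ σ.2.2.2)) := by
          refine tsum_congr fun σ => ?_
          rw [tsum_eq_single (σ.2.2.1 + σ.2.2.2) (fun c hc => if_neg (fun h => hc h.symm)), if_pos rfl]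
          have hP1 : 0 ≤ binomPMF p σ.1 σ.2.2.1 := binomPMF_nonneg_s13 hp0 hp1.le _ _
          have hP2 : 0 ≤ binomPMF q σ.2.1 σ.2.2.2 := binomPMF_nonneg_s13 hq0' hq1 _ _
          have hui : (0:ℝ) ≤ u ^ σ.2.2.1 := pow_nonneg hu0 _
          have huj : (0:ℝ) ≤ u ^ σ.2.2.2 := pow_nonneg hu0 _
          rw [pow_add, ENNReal.ofReal_mul hP1, ENNReal.ofReal_mul hP1,
            ENNReal.ofReal_mul hP2, ENNReal.ofReal_mul hui]
          ring
      _ = (∑' k : ℕ, ∑' i : ℕ,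
            μ {ω | C t ω = k} * ENNReal.ofReal (binomPMF p k i * u ^ i))
          * (∑' m : ℕ, ∑' j : ℕ,
            μ {ω | B 1 ω = m} * ENNReal.ofReal (binomPMF q m j * u ^ j)) := by
          calc ∑' σ : ℕ × ℕ × ℕ × ℕ,
                (μ {ω | C t ω = σ.1} * ENNReal.ofReal (binomPMF p σ.1 σ.2.2.1 * u ^ σ.2.2.1))
                * (μ {ω | B 1 ω = σ.2.1} * ENNReal.ofReal (binomPMF q σ.2.1 σ.2.2.2 * u ^ σ.2.2.2))
              = ∑' (k : ℕ), ∑' (τ : ℕ × ℕ × ℕ),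
                (μ {ω | C t ω = k} * ENNReal.ofReal (binomPMF p k τ.2.1 * u ^ τ.2.1))
                * (μ {ω | B 1 ω = τ.1} * ENNReal.ofReal (binomPMF q τ.1 τ.2.2 * u ^ τ.2.2)) :=
                ENNReal.tsum_prod'
            _ = ∑' (k : ℕ), ∑' (τ : ℕ × ℕ × ℕ),
                (μ {ω | C t ω = k} * ENNReal.ofReal (binomPMF p k τ.2.1 * u ^ τ.2.1))
                * (μ {ω | B 1 ω = τ.1} * ENNReal.ofReal (binomPMF q τ.1 τ.2.2 * u ^ τ.2.2))
              := rfl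
            _ = ∑' (k : ℕ), ∑' (m : ℕ), ∑' (ij : ℕ × ℕ),
                (μ {ω | C t ω = k} * ENNReal.ofReal (binomPMF p k ij.1 * u ^ ij.1))
                * (μ {ω | B 1 ω = m} * ENNReal.ofReal (binomPMF q m ij.2 * u ^ ij.2)) := by
                exact tsum_congr fun k => ENNReal.tsum_prod'
            _ = ∑' (k : ℕ), ∑' (m : ℕ), ∑' (i : ℕ), ∑' (j : ℕ),
                (μ {ω | C t ω = k} * ENNReal.ofReal (binomPMF p k i * u ^ i))
                * (μ {ω | B 1 ω = m} * ENNReal.ofReal (binomPMF q m j * u ^ j)) := by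
                exact tsum_congr fun k => tsum_congr fun m => ENNReal.tsum_prod'
            _ = ∑' (k : ℕ), ∑' (m : ℕ),
                (∑' (i : ℕ), μ {ω | C t ω = k} * ENNReal.ofReal (binomPMF p k i * u ^ i))
                * (∑' (j : ℕ), μ {ω | B 1 ω = m} * ENNReal.ofReal (binomPMF q m j * u ^ j)) := by
                refine tsum_congr fun k => tsum_congr fun m => ?_
                rw [← ENNReal.tsum_mul_right]
                exact tsum_congr fun i => ENNReal.tsum_mul_left
            _ = ∑' (k : ℕ),
                (∑' (i : ℕ), μ {ω | C t ω = k} * ENNReal.ofReal (binomPMF p k i * u ^ i))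
                * (∑' (m : ℕ), ∑' (j : ℕ),
                  μ {ω | B 1 ω = m} * ENNReal.ofReal (binomPMF q m j * u ^ j)) := by
                exact tsum_congr fun k => ENNReal.tsum_mul_left
            _ = _ := ENNReal.tsum_mul_right
      _ = G t (1 - p + p * u) * (∑' m : ℕ,
            μ {ω | B 1 ω = m} * ENNReal.ofReal ((1 - q + q * u) ^ m)) := by
          congr 1
          · refine tsum_congr fun k => ?_
            rw [ENNReal.tsum_mul_left, binom_sum hp0 hp1.le hu0 k]
          · refine tsum_congr fun m => ?_
            rw [ENNReal.tsum_mul_left, binom_sum hq0' hq1 hu0 m]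
      _ ≤ G t (1 - p + p * u) * ENNReal.ofReal (Real.exp (q * (u - 1) * (r * b))) :=
          mul_le_mul_right (hψ u hu) _
  -- base case
  have hG0 : ∀ u : ℝ, G 0 u = ENNReal.ofReal (u ^ n) := by
    intro u
    rw [hGdef]
    refine (tsum_eq_single n (fun k hk => ?_)).trans ?_
    · have : {ω | C 0 ω = k} = (∅ : Set Ω) := by
        ext ω; simp only [Set.mem_setOf_eq, hC0, Set.mem_empty_iff_false, iff_false]
        exact fun h => hk h.symm
      rw [this, measure_empty, zero_mul]
    · have : {ω | C 0 ω = n} = (Set.univ : Set Ω) := by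
        ext ω; simp [hC0]
      rw [this, measure_univ, one_mul]
  -- the induction
  have key : ∀ t : ℕ, ∀ u : ℝ, 1 ≤ u →
      G t u ≤ ENNReal.ofReal
        ((1 + p ^ t * (u - 1)) ^ n * Real.exp (r * n * (u - 1) * (1 - p ^ t))) := by
    intro t
    induction t with
    | zero =>
      intro u hu
      rw [hG0 u]
      apply le_of_eq
      congr 1
      simp only [pow_zero, one_mul, sub_self, mul_zero, Real.exp_zero]
      ring
    | succ t ih =>
      intro u hu
      have hgu : 1 ≤ 1 - p + p * u := by nlinarith
      have hpt : (0:ℝ) ≤ p ^ t := pow_nonneg hp0 t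
      have hbase : (0:ℝ) ≤ 1 + p ^ t * (1 - p + p * u - 1) := by nlinarith
      calc G (t+1) u
          ≤ G t (1 - p + p * u) * ENNReal.ofReal (Real.exp (q * (u - 1) * (r * b))) :=
            hstep t u hu
        _ ≤ ENNReal.ofReal ((1 + p ^ t * (1 - p + p * u - 1)) ^ n
              * Real.exp (r * n * (1 - p + p * u - 1) * (1 - p ^ t)))
            * ENNReal.ofReal (Real.exp (q * (u - 1) * (r * b))) :=
            mul_le_mul_left (ih _ hgu) _
        _ = ENNReal.ofReal ((1 + p ^ (t+1) * (u - 1)) ^ n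
              * Real.exp (r * n * (u - 1) * (1 - p ^ (t+1)))) := by
            rw [← ENNReal.ofReal_mul (mul_nonneg (pow_nonneg hbase n) (Real.exp_nonneg _))]
            congr 1
            have e1 : 1 + p ^ t * (1 - p + p * u - 1) = 1 + p ^ (t+1) * (u - 1) := by ring
            rw [e1, mul_assoc, ← Real.exp_add]
            congr 2
            have : q * (u - 1) * (r * b) = r * (u - 1) * (b * q) := by ring
            rw [this, hbq]
            ring
  -- Markov step
  refine ⟨0, le_rfl, fun t => ?_⟩
  have hgoal : (μ {ω | (1 + ε) * (n : ℝ) ≤ (C t ω : ℝ)}).toReal ≤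
      Real.exp (-(n : ℝ) * ((1 + ε) * Real.log ((1 + ε) / r) - (1 + ε - r))) := by
    set s : ℝ := (1 + ε) / r with hs_def
    have h1ε : (0:ℝ) < 1 + ε := by linarith
    have hs1 : 1 ≤ s := by
      rw [hs_def, le_div_iff₀ hr0]
      linarith
    have hs0 : (0:ℝ) < s := lt_of_lt_of_le one_pos hs1
    set M : ℝ := s ^ ((1 + ε) * (n:ℝ)) with hM_def
    have hM0 : 0 < M := Real.rpow_pos_of_pos hs0 _
    have hSdecomp : μ {ω | (1 + ε) * (n : ℝ) ≤ (C t ω : ℝ)}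
        = ∑' k : ℕ, (if (1 + ε) * (n:ℝ) ≤ (k:ℝ) then μ {ω | C t ω = k} else 0) := by
      have hset : {ω | (1 + ε) * (n : ℝ) ≤ (C t ω : ℝ)}
          = ⋃ k : ℕ, (if (1 + ε) * (n:ℝ) ≤ (k:ℝ) then {ω | C t ω = k} else (∅ : Set Ω)) := by
        ext ω
        simp only [Set.mem_setOf_eq, Set.mem_iUnion]
        constructor
        · intro h
          exact ⟨C t ω, by rw [if_pos h]; exact rfl⟩
        · rintro ⟨k, hk⟩
          by_cases h : (1 + ε) * (n:ℝ) ≤ (k:ℝ)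
          · rw [if_pos h] at hk
            simp only [Set.mem_setOf_eq] at hk
            rw [hk]; exact h
          · rw [if_neg h] at hk; exact absurd hk (Set.notMem_empty ω)
      rw [hset, measure_iUnion ?_ ?_]
      · refine tsum_congr fun k => ?_
        split
        · rfl
        · exact measure_empty
      · intro i j hij
        dsimp [Function.onFun]
        split <;> split <;>
          first
          | exact Set.disjoint_left.2 fun ω h1 h2 => hij (by
              simp only [Set.mem_setOf_eq] at h1 h2; rw [← h1, ← h2])
          | simp
      · intro k
        split
        · exact hmC t (measurableSet_singleton k)
        · exact MeasurableSet.empty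
    have hmark : μ {ω | (1 + ε) * (n : ℝ) ≤ (C t ω : ℝ)} * ENNReal.ofReal M ≤ G t s := by
      rw [hSdecomp, ← ENNReal.tsum_mul_right]
      refine Summable.tsum_le_tsum (fun k => ?_) ENNReal.summable ENNReal.summable
      split
      · rename_i hk
        refine mul_le_mul_right (ENNReal.ofReal_le_ofReal ?_) _
        calc M = s ^ ((1 + ε) * (n:ℝ)) := rfl
          _ ≤ s ^ ((k:ℝ)) := Real.rpow_le_rpow_of_exponent_le hs1 hk
          _ = s ^ k := Real.rpow_natCast s k
      · rw [zero_mul]; exact zero_le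
    have hreal : (1 + p ^ t * (s - 1)) ^ n * Real.exp (r * n * (s - 1) * (1 - p ^ t))
        ≤ Real.exp (-(n : ℝ) * ((1 + ε) * Real.log s - (1 + ε - r))) * M := by
      have hx : (0:ℝ) ≤ p ^ t * (s - 1) := mul_nonneg (pow_nonneg hp0 t) (by linarith)
      have h1 : (1 + p ^ t * (s - 1)) ^ n ≤ Real.exp ((n:ℝ) * (p ^ t * (s - 1))) := by
        rw [Real.exp_nat_mul]
        apply pow_le_pow_left₀ (by linarith)
        linarith [Real.add_one_le_exp (p ^ t * (s - 1))]
      have hMexp : M = Real.exp (Real.log s * ((1 + ε) * (n:ℝ))) := by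
        rw [hM_def, Real.rpow_def_of_pos hs0]
      calc (1 + p ^ t * (s - 1)) ^ n * Real.exp (r * n * (s - 1) * (1 - p ^ t))
          ≤ Real.exp ((n:ℝ) * (p ^ t * (s - 1))) * Real.exp (r * n * (s - 1) * (1 - p ^ t)) :=
            mul_le_mul_of_nonneg_right h1 (Real.exp_nonneg _)
        _ = Real.exp ((n:ℝ) * (p ^ t * (s - 1)) + r * n * (s - 1) * (1 - p ^ t)) :=
            (Real.exp_add _ _).symm
        _ ≤ Real.exp (-(n : ℝ) * ((1 + ε) * Real.log s - (1 + ε - r)) + Real.log s * ((1 + ε) * (n:ℝ))) := by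
            apply Real.exp_le_exp.2
            have hrs : r * (s - 1) = 1 + ε - r := by
              rw [hs_def]; field_simp
            have hfact : (0:ℝ) ≤ (r - 1) * ((n:ℝ) * (p ^ t * (s - 1))) :=
              mul_nonneg (by linarith) (mul_nonneg (Nat.cast_nonneg n) hx)
            nlinarith [hfact, hrs]
        _ = Real.exp (-(n : ℝ) * ((1 + ε) * Real.log s - (1 + ε - r))) * M := by
            rw [hMexp, ← Real.exp_add]
    have hμle : μ {ω | (1 + ε) * (n : ℝ) ≤ (C t ω : ℝ)}
        ≤ ENNReal.ofReal (Real.exp (-(n : ℝ) * ((1 + ε) * Real.log s - (1 + ε - r)))) := by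
      have h2 : μ {ω | (1 + ε) * (n : ℝ) ≤ (C t ω : ℝ)} * ENNReal.ofReal M
          ≤ ENNReal.ofReal (Real.exp (-(n : ℝ) * ((1 + ε) * Real.log s - (1 + ε - r))))
            * ENNReal.ofReal M := by
        calc μ {ω | (1 + ε) * (n : ℝ) ≤ (C t ω : ℝ)} * ENNReal.ofReal M
            ≤ G t s := hmark
          _ ≤ ENNReal.ofReal ((1 + p ^ t * (s - 1)) ^ n
                * Real.exp (r * n * (s - 1) * (1 - p ^ t))) := key t s hs1
          _ ≤ ENNReal.ofReal (Real.exp (-(n : ℝ) * ((1 + ε) * Real.log s - (1 + ε - r))) * M) :=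
              ENNReal.ofReal_le_ofReal hreal
          _ = _ := ENNReal.ofReal_mul (Real.exp_nonneg _)
      exact (ENNReal.mul_le_mul_iff_left (by simpa using hM0) ENNReal.ofReal_ne_top).mp h2
    exact ENNReal.toReal_le_of_le_ofReal (Real.exp_nonneg _) hμle
  calc (μ {ω | (1 + ε) * (n : ℝ) ≤ (C t ω : ℝ)}).toReal
      ≤ Real.exp (-(n : ℝ) * ((1 + ε) * Real.log ((1 + ε) / r) - (1 + ε - r))) := hgoal
    _ = Real.exp (-(n : ℝ) * ((1 + ε) * Real.log ((1 + ε) / r) - (1 + ε - r)))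
          * (1 + 0 * (n : ℝ) * ε * p ^ t) := by ring
end
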